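/- Let c : ℕ → ℕ (indexed from 1) be strictly increasing with c(1) = 1, c(2) = 4, and for every n ≥ 2: c(n+1) = c(n) + 1 if the condition “n+1 occurs among c(1), …, c(n)” holds exactly when c(n) is even, and c(n+1) = c(n) + 2 otherwise. Then for every integer k ≥ 0 and every integer j with −3·2^k ≤ j < 3·2^k, one has c(9·2^k − 3 + j) = 12·2^k − 3 + (3/2)·j + (1/2)·|j|. -/
import Mathlib


/-- The sequence A079000: strictly increasing, `c 1 = 1`, `c 2 = 4`, and for `n ≥ 2`,
`c (n+1) = c n + 1` when ((n+1) occurs among `c 1, …, c n`) ↔ (`c n` is even),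
and `c (n+1) = c n + 2` otherwise. -/
def IsA079000 (c : ℕ → ℕ) : Prop :=
  (∀ ⦃m n : ℕ⦄, 1 ≤ m → m < n → c m < c n) ∧ c 1 = 1 ∧ c 2 = 4 ∧
    ∀ n, 2 ≤ n →
      (((∃ i, 1 ≤ i ∧ i ≤ n ∧ c i = n + 1) ↔ Even (c n)) → c (n + 1) = c n + 1) ∧
      (¬ ((∃ i, 1 ≤ i ∧ i ≤ n ∧ c i = n + 1) ↔ Even (c n)) → c (n + 1) = c n + 2)

def IsPow2 (K : ℕ) : Prop := ∃ k, K = 2 ^ k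

lemma IsPow2.one_le {K : ℕ} (h : IsPow2 K) : 1 ≤ K := by
  obtain ⟨k, rfl⟩ := h; exact Nat.one_le_two_pow

lemma IsPow2.half {K : ℕ} (h : IsPow2 K) : K = 1 ∨ ∃ K', IsPow2 K' ∧ K = 2 * K' := by
  obtain ⟨k, rfl⟩ := h
  rcases k with _ | k'
  · left; rw [pow_zero]
  · right; exact ⟨2 ^ k', ⟨k', rfl⟩, by rw [pow_succ]; ring⟩

lemma a079000_main (c : ℕ → ℕ) (hc : IsA079000 c) :
    ∀ n K, IsPow2 K →
      (6 * K ≤ n + 3 → n + 3 ≤ 9 * K → c n = n + 3 * K) ∧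
      (9 * K ≤ n + 3 → n + 4 ≤ 12 * K → c n + 6 * K = 2 * n + 3) := by
  obtain ⟨hmono, h1, h2, hrec⟩ := hc
  intro n
  induction n using Nat.strong_induction_on with
  | _ n IH =>
  intro K hpow
  have hK : 1 ≤ K := hpow.one_le
  have hA : 6 * K ≤ n + 3 → n + 3 ≤ 9 * K → c n = n + 3 * K := by
    intro hl hu
    rcases Nat.lt_or_ge n 4 with h4 | h4
    · -- n = 3, K = 1
      have hn3 : n = 3 := by omega
      subst hn3
      have h23 := hrec 2 le_rfl
      have hne : ¬ ((∃ i, 1 ≤ i ∧ i ≤ 2 ∧ c i = 2 + 1) ↔ Even (c 2)) := by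
        intro hiff
        obtain ⟨i, hi1, hi2, hi3⟩ := hiff.mpr (by rw [h2]; decide)
        clear hiff
        interval_cases i <;> omega
      have h3 : c 3 = c 2 + 2 := h23.2 hne
      clear hne h23
      omega
    · obtain ⟨p, rfl⟩ : ∃ p, n = p + 1 := ⟨n - 1, by omega⟩
      obtain ⟨hr1, hr2⟩ := hrec p (by omega)
      by_cases hcase : p + 4 = 6 * K
      · -- start of interval: p + 1 = 6K - 3, K ≥ 2
        rcases hpow.half with hK1 | ⟨K', hpow', hKK⟩
        · exfalso; omega
        have hcp : c p + 6 * K' = 2 * p + 3 :=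
          (IH p (by omega) K' hpow').2 (by omega) (by omega)
        have hw : c (9 * K' - 3) = (9 * K' - 3) + 3 * K' :=
          (IH (9 * K' - 3) (by omega) K' hpow').1 (by omega) (by omega)
        have hiff : ¬ ((∃ i, 1 ≤ i ∧ i ≤ p ∧ c i = p + 1) ↔ Even (c p)) := by
          have hmem : ∃ i, 1 ≤ i ∧ i ≤ p ∧ c i = p + 1 :=
            ⟨9 * K' - 3, by omega, by omega, by omega⟩
          intro h
          have heven := h.mp hmem
          rw [Nat.even_iff] at heven
          clear h hmem
          omega
        have := hr2 hiff
        clear hiff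
        omega
      · -- p ≥ 6K - 3
        have hcp : c p = p + 3 * K := (IH p (by omega) K hpow).1 (by omega) (by omega)
        by_cases hend : p + 4 = 9 * K
        · -- p + 1 = 9K - 3
          have hw : c (6 * K - 3) = (6 * K - 3) + 3 * K :=
            (IH (6 * K - 3) (by omega) K hpow).1 (by omega) (by omega)
          have := hr1 ⟨fun hx => by rw [Nat.even_iff]; clear hx; omega,
            fun hx => ⟨6 * K - 3, by clear hx; omega, by clear hx; omega, by clear hx; omega⟩⟩
          omega
        · rcases hpow.half with hK1 | ⟨K', hpow', hKK⟩
          · -- K = 1 : p + 1 ∈ {4, 5}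
            subst hK1
            have hp34 : p = 3 ∨ p = 4 := by omega
            rcases hp34 with rfl | rfl
            · -- c 4 = c 3 + 1
              have := hr1 ⟨fun hx => by rw [Nat.even_iff]; clear hx; omega,
                fun hx => ⟨2, by clear hx; omega, by clear hx; omega, by clear hx; omega⟩⟩
              omega
            · -- c 5 = c 4 + 1
              have hc3 : c 3 = 3 + 3 * 1 :=
                (IH 3 (by omega) 1 ⟨0, by norm_num⟩).1 (by omega) (by omega)
              have hno : ¬ ∃ i, 1 ≤ i ∧ i ≤ 4 ∧ c i = 4 + 1 := by
                rintro ⟨i, hi1, hi4, hic⟩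
                interval_cases i <;> omega
              have := hr1 ⟨fun h => absurd h hno,
                fun he => False.elim (by rw [Nat.even_iff] at he; clear hno; omega)⟩
              clear hno
              omega
          · -- K ≥ 2, p + 1 ∈ [6K - 2, 9K - 4]
            by_cases hpar : p % 2 = 0
            · -- p + 1 odd : it occurs in the sequence
              obtain ⟨i, hi⟩ : ∃ i, 2 * i + 3 = (p + 1) + 6 * K' :=
                ⟨(p + 6 * K' - 2) / 2, by omega⟩
              have hci : c i + 6 * K' = 2 * i + 3 :=
                (IH i (by omega) K' hpow').2 (by omega) (by omega)
              have := hr1 ⟨fun hx => by rw [Nat.even_iff]; clear hx; omega,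
                fun hx => ⟨i, by clear hx; omega, by clear hx; omega, by clear hx; omega⟩⟩
              omega
            · -- p + 1 even : it does not occur
              obtain ⟨i, hi⟩ : ∃ i, 2 * i + 4 = (p + 1) + 6 * K' :=
                ⟨(p + 6 * K' - 3) / 2, by omega⟩
              have hci : c i + 6 * K' = 2 * i + 3 :=
                (IH i (by omega) K' hpow').2 (by omega) (by omega)
              have hci1 : c (i + 1) = p + 2 := by
                by_cases hlast : p + 5 = 9 * K
                · have := (IH (i + 1) (by omega) K hpow).1 (by omega) (by omega)
                  omega
                · have := (IH (i + 1) (by omega) K' hpow').2 (by omega) (by omega)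
                  omega
              have hno : ¬ ∃ j, 1 ≤ j ∧ j ≤ p ∧ c j = p + 1 := by
                rintro ⟨j, hj1, hjp, hjc⟩
                rcases lt_trichotomy j i with h | rfl | h
                · have := hmono hj1 h; omega
                · omega
                · rcases (by omega : i + 1 = j ∨ i + 1 < j) with heq | h'
                  · rw [← heq] at hjc; omega
                  · have := hmono (show 1 ≤ i + 1 by omega) h'; omega
              have := hr1 ⟨fun h => absurd h hno,
                fun he => False.elim (by rw [Nat.even_iff] at he; clear hno; omega)⟩
              clear hno
              omega
  refine ⟨hA, ?_⟩
  intro hl hu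
  by_cases hstart : n + 3 = 9 * K
  · have := hA (by omega) (by omega)
    omega
  · obtain ⟨p, rfl⟩ : ∃ p, n = p + 1 := ⟨n - 1, by omega⟩
    obtain ⟨hr1, hr2⟩ := hrec p (by omega)
    have hcp : c p + 6 * K = 2 * p + 3 :=
      (IH p (by clear * - hK; omega) K hpow).2 (by clear * - hl hstart; omega)
        (by clear * - hu; omega)
    have hw : c (p + 1 - 3 * K) = (p + 1 - 3 * K) + 3 * K :=
      (IH (p + 1 - 3 * K) (by clear * - hK hl hstart; omega) K hpow).1
        (by clear * - hl hstart; omega) (by clear * - hu; omega)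
    have hiff : ¬ ((∃ i, 1 ≤ i ∧ i ≤ p ∧ c i = p + 1) ↔ Even (c p)) := by
      have hmem : ∃ i, 1 ≤ i ∧ i ≤ p ∧ c i = p + 1 :=
        ⟨p + 1 - 3 * K, by omega, by omega, by omega⟩
      intro h
      have heven := h.mp hmem
      rw [Nat.even_iff] at heven
      clear h hmem
      omega
    have := hr2 hiff
    clear hiff
    omega

theorem a079000_formula (c : ℕ → ℕ) (hc : IsA079000 c) :
    ∀ (k : ℕ) (j : ℤ), -3 * 2 ^ k ≤ j → j < 3 * 2 ^ k →
      2 * (c (9 * 2 ^ k - 3 + j).toNat : ℤ) = 2 * (12 * 2 ^ k - 3) + 3 * j + |j| := by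
  intro k j hj1 hj2
  obtain ⟨K, hKdef⟩ : ∃ K : ℕ, K = 2 ^ k := ⟨_, rfl⟩
  have hKZ : (K : ℤ) = 2 ^ k := by rw [hKdef]; push_cast; ring
  rw [← hKZ] at hj1 hj2 ⊢
  have hK : 1 ≤ K := by rw [hKdef]; exact Nat.one_le_two_pow
  have hmain := a079000_main c hc (9 * (K : ℤ) - 3 + j).toNat K ⟨k, hKdef⟩
  clear hKdef hKZ
  rcases le_or_gt 0 j with hj | hj
  · rw [abs_of_nonneg hj]
    have hB := hmain.2 (by omega) (by omega)
    clear hmain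
    omega
  · rw [abs_of_neg hj]
    have hA := hmain.1 (by omega) (by omega)
    clear hmain
    omega
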